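/- Fix T > 0, σ ∈ ℝ, ρ ∈ ℝ, c ≥ 0 and G ≥ 0. Then the Riccati equation P'(s) + σ² P(s) - ρ P(s) - c P(s)² = 0 on [0,T] with terminal condition P(T) = G admits exactly one differentiable solution P : [0,T] → ℝ, and this solution satisfies 0 ≤ P(s) ≤ G e^{(σ² - ρ)(T - s)} for all s ∈ [0,T]. -/

import Mathlib

open Real Set

/-- With `T > 0`, `σ, ρ ∈ ℝ`, `c ≥ 0`, `G ≥ 0`, the Riccati equation
`P'(s) + σ² P(s) - ρ P(s) - c P(s)² = 0` on `[0,T]` with `P(T) = G` admits exactly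
one differentiable solution, and it satisfies `0 ≤ P(s) ≤ G e^{(σ²-ρ)(T-s)}`. -/
theorem riccati_existence_uniqueness_bound
    (T σ ρ c G : ℝ) (hT : 0 < T) (hc : 0 ≤ c) (hG : 0 ≤ G) :
    ∃ P P' : ℝ → ℝ,
      (∀ s ∈ Set.Icc (0 : ℝ) T,
        HasDerivWithinAt P (P' s) (Set.Icc (0 : ℝ) T) s ∧
        P' s + σ ^ 2 * P s - ρ * P s - c * (P s) ^ 2 = 0) ∧
      P T = G ∧
      (∀ s ∈ Set.Icc (0 : ℝ) T,
        0 ≤ P s ∧ P s ≤ G * Real.exp ((σ ^ 2 - ρ) * (T - s))) ∧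
      (∀ Q Q' : ℝ → ℝ,
        (∀ s ∈ Set.Icc (0 : ℝ) T,
          HasDerivWithinAt Q (Q' s) (Set.Icc (0 : ℝ) T) s ∧
          Q' s + σ ^ 2 * Q s - ρ * Q s - c * (Q s) ^ 2 = 0) →
        Q T = G → Set.EqOn Q P (Set.Icc (0 : ℝ) T)) := by
  set k : ℝ := σ ^ 2 - ρ with hk
  set f : ℝ → ℝ := fun u => Real.exp (k * (T - u)) with hf
  have hf_cont : Continuous f := by continuity
  have hf_pos : ∀ u, 0 < f u := fun u => Real.exp_pos _
  set E : ℝ → ℝ := fun s => Real.exp (k * (T - s)) with hE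
  set I : ℝ → ℝ := fun s => ∫ u in s..T, f u with hI
  set D : ℝ → ℝ := fun s => 1 + c * G * I s with hD
  set P : ℝ → ℝ := fun s => G * E s / D s with hP
  set P' : ℝ → ℝ := fun s => c * (P s) ^ 2 - k * P s with hP'
  -- derivative of I
  have hI_deriv : ∀ s : ℝ, HasDerivAt I (-(f s)) s := by
    intro s
    have h1 : HasDerivAt (fun u => ∫ x in T..u, f x) (f s) s := by
      exact intervalIntegral.integral_hasDerivAt_right
        (hf_cont.intervalIntegrable _ _)
        (hf_cont.stronglyMeasurableAtFilter _ _)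
        hf_cont.continuousAt
    have : I = fun s => -(∫ x in T..s, f x) := by
      funext u
      show (∫ x in u..T, f x) = -(∫ x in T..u, f x)
      rw [intervalIntegral.integral_symm]
    rw [this]
    exact h1.neg
  have hD_deriv : ∀ s : ℝ, HasDerivAt D (-(c * G * f s)) s := by
    intro s
    have := ((hI_deriv s).const_mul (c * G)).const_add 1
    simpa [mul_neg, hD] using this
  have hE_deriv : ∀ s : ℝ, HasDerivAt E (-k * E s) s := by
    intro s
    have h1 : HasDerivAt (fun s : ℝ => k * (T - s)) (-k) s := by
      simpa using ((hasDerivAt_id s).const_sub T).const_mul k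
    simpa [hE, mul_comm] using h1.exp
  -- positivity of D on s ≤ T
  have hI_nonneg : ∀ s : ℝ, s ≤ T → 0 ≤ I s := by
    intro s hs
    exact intervalIntegral.integral_nonneg hs (fun u _ => (hf_pos u).le)
  have hD_ge_one : ∀ s : ℝ, s ≤ T → 1 ≤ D s := by
    intro s hs
    have := hI_nonneg s hs
    have : 0 ≤ c * G * I s := by positivity
    simp only [hD]; linarith
  have hD_pos : ∀ s : ℝ, s ≤ T → 0 < D s := fun s hs =>
    lt_of_lt_of_le one_pos (hD_ge_one s hs)
  -- derivative of P
  have hP_deriv : ∀ s : ℝ, s ≤ T → HasDerivAt P (P' s) s := by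
    intro s hs
    have hDne : D s ≠ 0 := (hD_pos s hs).ne'
    have h1 : HasDerivAt (fun s => G * E s) (G * (-k * E s)) s :=
      (hE_deriv s).const_mul G
    have h2 : HasDerivAt (fun x => G * E x / D x) _ s := h1.div (hD_deriv s) hDne
    convert h2 using 1
    simp only [hP', hP]
    have hfE : f s = E s := rfl
    field_simp [hfE]
    ring
  have hPT : P T = G := by
    simp [hP, hD, hI, hE, intervalIntegral.integral_same]
  have hbound : ∀ s ∈ Set.Icc (0 : ℝ) T,
      0 ≤ P s ∧ P s ≤ G * Real.exp ((σ ^ 2 - ρ) * (T - s)) := by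
    intro s hs
    have hDpos := hD_pos s hs.2
    have hnum : 0 ≤ G * E s := by positivity
    constructor
    · exact div_nonneg hnum hDpos.le
    · exact div_le_self hnum (hD_ge_one s hs.2)
  refine ⟨P, P', ?_, hPT, hbound, ?_⟩
  · intro s hs
    refine ⟨(hP_deriv s hs.2).hasDerivWithinAt, ?_⟩
    simp only [hP', hk]
    ring
  · -- uniqueness
    intro Q Q' hQ hQT
    have hQcont : ContinuousOn Q (Set.Icc 0 T) := fun s hs =>
      (hQ s hs).1.continuousWithinAt
    have hPcont : ContinuousOn P (Set.Icc 0 T) := fun s hs =>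
      ((hP_deriv s hs.2).hasDerivWithinAt).continuousWithinAt
    obtain ⟨Mq, hMq⟩ := isCompact_Icc.exists_bound_of_continuousOn hQcont
    obtain ⟨Mp, hMp⟩ := isCompact_Icc.exists_bound_of_continuousOn hPcont
    set M : ℝ := max Mq Mp with hM
    have hM0 : 0 ≤ M := by
      have := hMq 0 (by constructor <;> [rfl; exact hT.le])
      have h0 : (0:ℝ) ≤ Mq := le_trans (norm_nonneg _) this
      exact le_trans h0 (le_max_left _ _)
    have hQmem : ∀ t ∈ Set.Icc (0:ℝ) T, Q t ∈ Set.Icc (-M) M := by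
      intro t ht
      have := hMq t ht
      have habs : |Q t| ≤ M := le_trans this (le_max_left _ _)
      exact abs_le.mp habs
    have hPmem : ∀ t ∈ Set.Icc (0:ℝ) T, P t ∈ Set.Icc (-M) M := by
      intro t ht
      have := hMp t ht
      have habs : |P t| ≤ M := le_trans this (le_max_right _ _)
      exact abs_le.mp habs
    set v : ℝ → ℝ → ℝ := fun _ x => c * x ^ 2 - k * x with hv
    set K : NNReal := Real.toNNReal (|k| + 2 * c * M) with hK
    have hKcoe : (K : ℝ) = |k| + 2 * c * M := by
      rw [hK, Real.coe_toNNReal]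
      positivity
    have hlip : ∀ t, LipschitzOnWith K (v t) (Set.Icc (-M) M) := by
      intro t
      rw [lipschitzOnWith_iff_dist_le_mul]
      intro x hx y hy
      rw [Real.dist_eq, Real.dist_eq, hKcoe]
      have hxe : |x| ≤ M := abs_le.mpr hx
      have hye : |y| ≤ M := abs_le.mpr hy
      have h1 : v t x - v t y = (x - y) * (c * (x + y) - k) := by
        simp only [hv]; ring
      rw [h1, abs_mul]
      have h2 : |c * (x + y) - k| ≤ |k| + 2 * c * M := by
        have h3 : |c * (x + y) - k| ≤ |c * (x + y)| + |k| := abs_sub _ _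
        have h4 : |c * (x + y)| = c * |x + y| := by
          rw [abs_mul, abs_of_nonneg hc]
        have h5 : |x + y| ≤ |x| + |y| := abs_add_le _ _
        nlinarith [abs_nonneg (x + y)]
      calc |x - y| * |c * (x + y) - k| ≤ |x - y| * (|k| + 2 * c * M) := by
            exact mul_le_mul_of_nonneg_left h2 (abs_nonneg _)
        _ = (|k| + 2 * c * M) * |x - y| := mul_comm _ _
    have hmem_nhds : ∀ t ∈ Set.Ioc (0:ℝ) T, Set.Icc (0:ℝ) T ∈ nhdsWithin t (Set.Iic t) := by
      intro t ht
      apply mem_nhdsWithin.mpr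
      refine ⟨Set.Ioi 0, isOpen_Ioi, ht.1, ?_⟩
      rintro x ⟨hx1, hx2⟩
      exact ⟨le_of_lt hx1, le_trans hx2 ht.2⟩
    have hQ' : ∀ t ∈ Set.Ioc (0:ℝ) T, HasDerivWithinAt Q (v t (Q t)) (Set.Iic t) t := by
      intro t ht
      have ht' : t ∈ Set.Icc (0:ℝ) T := ⟨ht.1.le, ht.2⟩
      obtain ⟨hd, he⟩ := hQ t ht'
      have hQ'eq : Q' t = v t (Q t) := by simp only [hv, hk]; linarith
      rw [← hQ'eq]
      exact hd.mono_of_mem_nhdsWithin (hmem_nhds t ht)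
    have hP'v : ∀ t ∈ Set.Ioc (0:ℝ) T, HasDerivWithinAt P (v t (P t)) (Set.Iic t) t := by
      intro t ht
      have hd := (hP_deriv t ht.2).hasDerivWithinAt (s := Set.Iic t)
      simpa [hv, hP'] using hd
    exact ODE_solution_unique_of_mem_Icc_left (fun t _ => hlip t) hQcont hQ'
      (fun t ht => hQmem t ⟨ht.1.le, ht.2⟩) hPcont hP'v
      (fun t ht => hPmem t ⟨ht.1.le, ht.2⟩) (by rw [hQT, hPT])
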